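/- Let H be an m×m real symmetric positive definite matrix, let m ≤ n, and let W ∈ R^{m×n} be nonzero with G = H W of full row rank. With the optimal step size η* = ‖H W‖₁ / Tr(H), the whitened update W' = W − η* (G Gᵀ)^{-1/2} G satisfies the exact contraction identity (L(W') − L*)/(L(W) − L*) = 1 − ‖H W‖₁² / ( Tr(Wᵀ H W) · Tr(H) ), where L(W) = (1/2)·Tr(Wᵀ H W), L* = 0, and ‖·‖₁ is the Schatten 1-norm. -/

import Mathlib

open Matrix

open Classical in
/-- The unique positive semidefinite square root of a positive semidefinite matrix
(junk value `0` if `A` is not positive semidefinite). -/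
noncomputable def matSqrt {m : ℕ} (A : Matrix (Fin m) (Fin m) ℝ) : Matrix (Fin m) (Fin m) ℝ :=
  if h : A.PosSemidef then
    (h.1.eigenvectorUnitary : Matrix (Fin m) (Fin m) ℝ) *
      diagonal ((↑) ∘ (Real.sqrt ∘ h.1.eigenvalues)) *
      (star h.1.eigenvectorUnitary : Matrix (Fin m) (Fin m) ℝ)
  else 0

/-- The GradWhitening operator `A ↦ (A Aᵀ)^{-1/2} A`. -/
noncomputable def whiten {m n : ℕ} (A : Matrix (Fin m) (Fin n) ℝ) : Matrix (Fin m) (Fin n) ℝ :=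
  (matSqrt (A * Aᵀ))⁻¹ * A

/-- The Schatten 1-norm (sum of singular values): `‖A‖₁ = Tr((A Aᵀ)^{1/2})`. -/
noncomputable def schattenOne {m n : ℕ} (A : Matrix (Fin m) (Fin n) ℝ) : ℝ :=
  (matSqrt (A * Aᵀ)).trace

/-- The quadratic loss `L(W) = (1/2) * Tr(Wᵀ H W)`. -/
noncomputable def loss {m n : ℕ} (H : Matrix (Fin m) (Fin m) ℝ)
    (W : Matrix (Fin m) (Fin n) ℝ) : ℝ :=
  (1 / 2) * (Wᵀ * H * W).trace

/-- Exact contraction identity of the whitened update with the optimal step size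
`η* = ‖H W‖₁ / Tr(H)`:
`(L(W') − L*)/(L(W) − L*) = 1 − ‖H W‖₁² / (Tr(Wᵀ H W) · Tr(H))`, with `L* = 0`. -/
theorem whitened_step_contraction_identity {m n : ℕ} (hmn : m ≤ n)
    (H : Matrix (Fin m) (Fin m) ℝ) (hH : H.PosDef)
    (W : Matrix (Fin m) (Fin n) ℝ) (hW : W ≠ 0) (hrank : (H * W).rank = m) :
    (loss H (W - (schattenOne (H * W) / H.trace) • whiten (H * W)) - 0) / (loss H W - 0) =
      1 - schattenOne (H * W) ^ 2 / ((Wᵀ * H * W).trace * H.trace) := by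
  classical
  set G := H * W with hG
  -- G over ℝ: Gᴴ = Gᵀ
  have hPSD : (G * Gᵀ).PosSemidef := by
    have := Matrix.posSemidef_self_mul_conjTranspose G
    rwa [conjTranspose_eq_transpose_of_trivial] at this
  have hmatSqrt : matSqrt (G * Gᵀ) =
      (hPSD.1.eigenvectorUnitary : Matrix (Fin m) (Fin m) ℝ) *
        diagonal ((↑) ∘ (Real.sqrt ∘ hPSD.1.eigenvalues)) *
        (star hPSD.1.eigenvectorUnitary : Matrix (Fin m) (Fin m) ℝ) := dif_pos hPSD
  set S := (hPSD.1.eigenvectorUnitary : Matrix (Fin m) (Fin m) ℝ) *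
        diagonal ((↑) ∘ (Real.sqrt ∘ hPSD.1.eigenvalues)) *
        (star hPSD.1.eigenvectorUnitary : Matrix (Fin m) (Fin m) ℝ) with hSdef
  have hS2 : S * S = G * Gᵀ := by
    have hsp := hPSD.1.spectral_theorem
    rw [Unitary.conjStarAlgAut_apply] at hsp
    have hVV : (star hPSD.1.eigenvectorUnitary : Matrix (Fin m) (Fin m) ℝ) *
        (hPSD.1.eigenvectorUnitary : Matrix (Fin m) (Fin m) ℝ) = 1 :=
      Unitary.coe_star_mul_self _
    conv_rhs => rw [hsp]
    rw [hSdef]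
    simp only [Matrix.mul_assoc]
    rw [← Matrix.mul_assoc (star hPSD.1.eigenvectorUnitary : Matrix (Fin m) (Fin m) ℝ), hVV,
      Matrix.one_mul, ← Matrix.mul_assoc (diagonal _) (diagonal _), diagonal_mul_diagonal]
    congr 3
    funext i
    simp [Real.mul_self_sqrt (hPSD.eigenvalues_nonneg i)]
  have hSpsd : S.PosSemidef := by
    have hD : (diagonal ((↑) ∘ (Real.sqrt ∘ hPSD.1.eigenvalues)) :
        Matrix (Fin m) (Fin m) ℝ).PosSemidef :=
      posSemidef_diagonal_iff.mpr (fun i => by simp [Real.sqrt_nonneg])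
    have := hD.mul_mul_conjTranspose_same
      (hPSD.1.eigenvectorUnitary : Matrix (Fin m) (Fin m) ℝ)
    rw [hSdef]
    simpa [star_eq_conjTranspose] using this
  have hSsym : Sᵀ = S := by
    rw [← conjTranspose_eq_transpose_of_trivial]; exact hSpsd.1
  -- det (G*Gᵀ) ≠ 0
  have hdetGG : (G * Gᵀ).det ≠ 0 := by
    intro h0
    obtain ⟨v, hv, hv0⟩ := (Matrix.exists_mulVec_eq_zero_iff).mpr h0
    have hrk : (G * Gᵀ).rank = m := by rw [Matrix.rank_self_mul_transpose, hrank]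
    have hsum := LinearMap.finrank_range_add_finrank_ker (G * Gᵀ).mulVecLin
    have hmem : v ∈ LinearMap.ker (G * Gᵀ).mulVecLin := by
      rw [LinearMap.mem_ker, Matrix.mulVecLin_apply]; exact hv0
    have hkpos : 0 < Module.finrank ℝ (LinearMap.ker (G * Gᵀ).mulVecLin) := by
      refine Module.finrank_pos_iff.mpr ?_
      exact ⟨⟨v, hmem⟩, 0, by simp [Subtype.ext_iff, hv]⟩
    rw [Module.finrank_fintype_fun_eq_card] at hsum
    simp only [Fintype.card_fin] at hsum
    have : (G * Gᵀ).rank = Module.finrank ℝ (LinearMap.range (G * Gᵀ).mulVecLin) := rfl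
    omega
  have hdetS : S.det ≠ 0 := by
    intro h0
    apply hdetGG
    rw [← hS2, Matrix.det_mul, h0, mul_zero]
  have hSinv : S⁻¹ * S = 1 := Matrix.nonsing_inv_mul S (isUnit_iff_ne_zero.mpr hdetS)
  have hSinv' : S * S⁻¹ = 1 := Matrix.mul_nonsing_inv S (isUnit_iff_ne_zero.mpr hdetS)
  have hSinvT : (S⁻¹)ᵀ = S⁻¹ := by rw [Matrix.transpose_nonsing_inv, hSsym]
  have hHT : Hᵀ = H := by
    rw [← conjTranspose_eq_transpose_of_trivial]; exact hH.1
  set U := S⁻¹ * G with hU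
  -- key traces
  have tr1 : (Uᵀ * H * W).trace = S.trace := by
    have e1 : Uᵀ * H * W = Gᵀ * (S⁻¹ * G) := by
      rw [hU, Matrix.transpose_mul, hSinvT]
      simp only [Matrix.mul_assoc, hG]
    rw [e1, Matrix.trace_mul_comm, Matrix.mul_assoc, ← hS2, ← Matrix.mul_assoc,
      hSinv, Matrix.one_mul]
  have tr2 : (Wᵀ * H * U).trace = S.trace := by
    have h1 : (Wᵀ * H * U)ᵀ = Uᵀ * H * W := by
      simp only [Matrix.transpose_mul, Matrix.transpose_transpose, hHT, Matrix.mul_assoc]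
    rw [← Matrix.trace_transpose (Wᵀ * H * U), h1, tr1]
  have tr3 : (Uᵀ * H * U).trace = H.trace := by
    have e1 : Uᵀ * H * U = Gᵀ * (S⁻¹ * (H * (S⁻¹ * G))) := by
      rw [hU, Matrix.transpose_mul, hSinvT]
      simp only [Matrix.mul_assoc, hG]
    rw [e1, Matrix.trace_mul_comm]
    have e2 : S⁻¹ * (H * (S⁻¹ * G)) * Gᵀ = S⁻¹ * (H * S) := by
      simp only [Matrix.mul_assoc, ← hS2]
      rw [show S⁻¹ * (S * S) = S by rw [← Matrix.mul_assoc, hSinv, Matrix.one_mul]]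
    rw [e2, Matrix.trace_mul_comm, Matrix.mul_assoc, hSinv', Matrix.mul_one]
  -- positivity of T
  have hdiag : ∀ j, (Wᵀ * H * W) j j = (fun i => W i j) ⬝ᵥ H *ᵥ (fun i => W i j) := by
    intro j
    simp only [Matrix.mul_apply, Matrix.transpose_apply, dotProduct, Matrix.mulVec,
      Finset.sum_mul, Finset.mul_sum]
    rw [Finset.sum_comm]
    apply Finset.sum_congr rfl; intro i _
    apply Finset.sum_congr rfl; intro k _
    ring
  have hT : 0 < (Wᵀ * H * W).trace := by
    rw [Matrix.trace]
    obtain ⟨i0, j0, hij⟩ : ∃ i j, W i j ≠ 0 := by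
      by_contra h
      push_neg at h
      exact hW (by ext i j; simpa using h i j)
    refine Finset.sum_pos' (fun j _ => ?_) ⟨j0, Finset.mem_univ _, ?_⟩
    · have := hH.posSemidef.dotProduct_mulVec_nonneg (fun i => W i j)
      simpa [Matrix.diag, hdiag j] using this
    · have hc : (fun i => W i j0) ≠ 0 := by
        intro h0
        exact hij (by simpa using congrFun h0 i0)
      have := hH.dotProduct_mulVec_pos hc
      simpa [Matrix.diag, hdiag j0] using this
  have hm : 0 < m := by
    rcases Nat.eq_zero_or_pos m with h0 | h
    · exfalso; apply hW; subst h0; ext i j; exact i.elim0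
    · exact h
  have hTrH : 0 < H.trace := by
    rw [Matrix.trace]
    have : Nonempty (Fin m) := ⟨⟨0, hm⟩⟩
    refine Finset.sum_pos (fun i _ => ?_) Finset.univ_nonempty
    have hpi : (Pi.single i 1 : Fin m → ℝ) ≠ 0 := by
      intro h0
      have := congrFun h0 i
      simp at this
    have := hH.dotProduct_mulVec_pos hpi
    simpa [Matrix.diag, dotProduct, Matrix.mulVec, Pi.single_apply] using this
  -- unfold definitions
  have hwhiten : whiten G = U := by rw [whiten, hmatSqrt]
  have hsch : schattenOne G = S.trace := by rw [schattenOne, hmatSqrt]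
  set T := (Wᵀ * H * W).trace with hTdef
  set s := S.trace with hsdef
  set h := H.trace with hhdef
  set η := s / h with hη
  -- expand loss
  have hexp : loss H (W - η • U) = (1/2) * (T - 2 * η * s + η^2 * h) := by
    rw [loss]
    have : (W - η • U)ᵀ * H * (W - η • U)
        = Wᵀ * H * W - η • (Uᵀ * H * W) - η • (Wᵀ * H * U) + (η * η) • (Uᵀ * H * U) := by
      rw [Matrix.transpose_sub, Matrix.transpose_smul]
      rw [Matrix.sub_mul, Matrix.sub_mul, Matrix.mul_sub, Matrix.mul_sub]
      rw [Matrix.smul_mul, Matrix.smul_mul, Matrix.mul_smul, Matrix.mul_smul, Matrix.smul_mul]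
      rw [smul_smul]
      abel
    rw [this]
    rw [Matrix.trace_add, Matrix.trace_sub, Matrix.trace_sub, Matrix.trace_smul,
      Matrix.trace_smul, Matrix.trace_smul, tr1, tr2, tr3]
    simp only [smul_eq_mul, ← hTdef]
    ring
  rw [hsch, hwhiten, hexp, loss, ← hTdef]
  rw [hη]
  field_simp
  linear_combination (T * h - s ^ 2) * (mul_inv_cancel₀ hT.ne')
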